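/- Let K be a field, F a field extension of K, and A a K-algebra equipped with a ℤ/2-grading A = A₀ ⊕ A₁ (A₀, A₁ are K-submodules with A_i·A_j ⊆ A_{i+j} and 1 ∈ A₀), and endow the F-algebra F ⊗_K A with the induced grading (F ⊗_K A₀) ⊕ (F ⊗_K A₁). Suppose that F ⊗_K A is a central simple graded algebra over F, i.e.: (i) every homogeneous element x of F ⊗_K A that supercommutes with all homogeneous elements (x·y = (−1)^{|x||y|} y·x for all homogeneous y) lies in F·1; and (ii) the only two-sided ideals I of F ⊗_K A that are graded (I equals the sum of its intersections with the two graded components) are the zero ideal and the whole algebra. Then A is a central simple graded algebra over K: every homogeneous a ∈ A supercommuting with all homogeneous elements of A lies in K·1, and the only graded two-sided ideals of A are 0 and A. -/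

import Mathlib

open TensorProduct

/-- A ℤ/2-graded algebra `B` over a field `k` (graded pieces `𝒜 : ZMod 2 → Submodule k B`)
is a *central simple graded algebra* if every homogeneous supercentral element lies in
`k·1` and the only graded two-sided ideals of `B` are `⊥` and `⊤`. -/
def IsCSGA (k : Type*) [Field k] (B : Type*) [Ring B] [Algebra k B]
    (𝒜 : ZMod 2 → Submodule k B) : Prop :=
  (∀ (i : ZMod 2) (x : B), x ∈ 𝒜 i →
      (∀ (j : ZMod 2) (y : B), y ∈ 𝒜 j →
        x * y = ((-1 : ℤ) ^ (i.val * j.val)) • (y * x)) →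
      ∃ c : k, x = algebraMap k B c) ∧
  (∀ I : TwoSidedIdeal B,
      (∀ x ∈ I, ∃ y ∈ I, ∃ z ∈ I, y ∈ 𝒜 0 ∧ z ∈ 𝒜 1 ∧ x = y + z) →
      I = ⊥ ∨ I = ⊤)

/-- Base change of submodules is monotone. -/
lemma baseChange_mono' {K F A : Type*} [Field K] [Field F] [Algebra K F]
    [AddCommGroup A] [Module K A] {p q : Submodule K A} (h : p ≤ q) :
    p.baseChange F ≤ q.baseChange F :=
  Submodule.baseChange_mono F h

/-- If `F ⊗_K A` with the induced ℤ/2-grading is a central simple graded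
algebra over the field extension `F`, then the ℤ/2-graded `K`-algebra `A` is a central
simple graded algebra over `K`. -/
theorem csga_of_baseChange_csga {K F A : Type*} [Field K] [Field F] [Algebra K F]
    [Ring A] [Algebra K A]
    (𝒜 : ZMod 2 → Submodule K A)
    (hdecomp : DirectSum.IsInternal 𝒜)
    (hone : (1 : A) ∈ 𝒜 0)
    (hmul : ∀ (i j : ZMod 2), ∀ x ∈ 𝒜 i, ∀ y ∈ 𝒜 j, x * y ∈ 𝒜 (i + j))
    (hF : IsCSGA F (F ⊗[K] A) (fun i => (𝒜 i).baseChange F)) :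
    IsCSGA K A 𝒜 := by
  classical
  -- a K-linear retraction of K → F
  obtain ⟨g, hg⟩ := (Algebra.linearMap K F).exists_leftInverse_of_injective
    (LinearMap.ker_eq_bot.2 (algebraMap K F).injective)
  have hg1 : g 1 = 1 := by
    have := LinearMap.congr_fun hg 1
    simpa using this
  -- the retraction F ⊗ A → A
  set φ : F ⊗[K] A →ₗ[K] A :=
    (TensorProduct.lid K A).toLinearMap ∘ₗ LinearMap.rTensor A g with hφdef
  have hφ_tmul : ∀ (f : F) (a : A), φ (f ⊗ₜ[K] a) = g f • a := by
    intro f a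
    simp [hφdef]
  have hφ_one : ∀ a : A, φ (1 ⊗ₜ[K] a) = a := by
    intro a; rw [hφ_tmul, hg1, one_smul]
  -- φ maps base-changed submodules back into the submodule
  have hφ_mem : ∀ (p : Submodule K A) (t : F ⊗[K] A), t ∈ p.baseChange F → φ t ∈ p := by
    intro p t ht
    have key : ∀ f : F, φ (f • t) ∈ p := by
      refine Submodule.span_induction
        (p := fun t' _ => ∀ f : F, φ (f • t') ∈ p) ?_ ?_ ?_ ?_ ((Submodule.baseChange_eq_span F p).le ht)
      · rintro _ ⟨m, hm, rfl⟩ f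
        have : f • ((TensorProduct.mk K F A) 1 m) = f ⊗ₜ[K] m := by
          simp [TensorProduct.mk_apply, smul_tmul', smul_eq_mul]
        rw [this, hφ_tmul]
        exact p.smul_mem _ hm
      · intro f; simp
      · intro a b _ _ ha hb f
        rw [smul_add, map_add]
        exact p.add_mem (ha f) (hb f)
      · intro c a _ ha f
        rw [smul_smul]
        exact ha (f * c)
    simpa using key 1
  constructor
  · -- supercenter
    intro i x hx hcomm
    have hx' : (1 : F) ⊗ₜ[K] x ∈ (𝒜 i).baseChange F :=
      Submodule.tmul_mem_baseChange_of_mem 1 hx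
    have hcomm' : ∀ (j : ZMod 2) (y : F ⊗[K] A), y ∈ (𝒜 j).baseChange F →
        (1 ⊗ₜ[K] x) * y = ((-1 : ℤ) ^ (i.val * j.val)) • (y * (1 ⊗ₜ[K] x)) := by
      intro j y hy
      refine Submodule.span_induction
        (p := fun y' _ => (1 ⊗ₜ[K] x) * y' =
          ((-1 : ℤ) ^ (i.val * j.val)) • (y' * (1 ⊗ₜ[K] x))) ?_ ?_ ?_ ?_ ((Submodule.baseChange_eq_span F (𝒜 j)).le hy)
      · rintro _ ⟨m, hm, rfl⟩
        have h1 : (1 ⊗ₜ[K] x : F ⊗[K] A) * (1 ⊗ₜ[K] m) = 1 ⊗ₜ[K] (x * m) := by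
          simp [Algebra.TensorProduct.tmul_mul_tmul]
        have h2 : ((1:F) ⊗ₜ[K] m : F ⊗[K] A) * (1 ⊗ₜ[K] x) = 1 ⊗ₜ[K] (m * x) := by
          simp [Algebra.TensorProduct.tmul_mul_tmul]
        rw [TensorProduct.mk_apply, h1, h2, hcomm j m hm, TensorProduct.tmul_smul]
      · simp
      · intro a b _ _ ha hb
        rw [mul_add, add_mul, smul_add, ha, hb]
      · intro c a _ ha
        rw [Algebra.mul_smul_comm, Algebra.smul_mul_assoc, ha, smul_comm]
    obtain ⟨c, hc⟩ := hF.1 i (1 ⊗ₜ[K] x) hx' hcomm'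
    refine ⟨g c, ?_⟩
    have : algebraMap F (F ⊗[K] A) c = c ⊗ₜ[K] 1 := rfl
    have hx2 : x = φ (c ⊗ₜ[K] 1) := by
      rw [← this, ← hc, hφ_one]
    rw [hx2, hφ_tmul, Algebra.algebraMap_eq_smul_one]
  · -- graded ideals
    intro I hI
    -- I as a K-submodule
    set S : Submodule K A :=
      { carrier := I
        add_mem' := fun ha hb => I.add_mem ha hb
        zero_mem' := I.zero_mem
        smul_mem' := fun k a ha => by
          rw [Algebra.smul_def]
          exact I.mul_mem_left _ _ ha } with hSdef
    have hSmem : ∀ a : A, a ∈ S ↔ a ∈ I := fun a => Iff.rfl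
    -- multiplication closure of the base change
    have key_mul : ∀ (t x : F ⊗[K] A), x ∈ S.baseChange F →
        t * x ∈ S.baseChange F ∧ x * t ∈ S.baseChange F := by
      intro t x hx
      induction t with
      | zero => simpa using (S.baseChange F).zero_mem
      | tmul f a =>
        constructor
        · refine Submodule.span_induction
            (p := fun x' _ => (f ⊗ₜ[K] a) * x' ∈ S.baseChange F) ?_ ?_ ?_ ?_ ((Submodule.baseChange_eq_span F S).le hx)
          · rintro _ ⟨m, hm, rfl⟩
            have : (f ⊗ₜ[K] a : F ⊗[K] A) * ((TensorProduct.mk K F A) 1 m)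
                = f ⊗ₜ[K] (a * m) := by
              simp [TensorProduct.mk_apply, Algebra.TensorProduct.tmul_mul_tmul]
            rw [this]
            exact Submodule.tmul_mem_baseChange_of_mem _ (I.mul_mem_left _ _ hm)
          · simpa using (S.baseChange F).zero_mem
          · intro u v _ _ hu hv; rw [mul_add]; exact (S.baseChange F).add_mem hu hv
          · intro c u _ hu; rw [Algebra.mul_smul_comm]; exact (S.baseChange F).smul_mem _ hu
        · refine Submodule.span_induction
            (p := fun x' _ => x' * (f ⊗ₜ[K] a) ∈ S.baseChange F) ?_ ?_ ?_ ?_ ((Submodule.baseChange_eq_span F S).le hx)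
          · rintro _ ⟨m, hm, rfl⟩
            have : ((TensorProduct.mk K F A) 1 m : F ⊗[K] A) * (f ⊗ₜ[K] a)
                = f ⊗ₜ[K] (m * a) := by
              simp [TensorProduct.mk_apply, Algebra.TensorProduct.tmul_mul_tmul]
            rw [this]
            exact Submodule.tmul_mem_baseChange_of_mem _ (I.mul_mem_right _ _ hm)
          · simpa using (S.baseChange F).zero_mem
          · intro u v _ _ hu hv; rw [add_mul]; exact (S.baseChange F).add_mem hu hv
          · intro c u _ hu; rw [Algebra.smul_mul_assoc]; exact (S.baseChange F).smul_mem _ hu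
      | add u v hu hv =>
        exact ⟨by rw [add_mul]; exact (S.baseChange F).add_mem hu.1 hv.1,
          by rw [mul_add]; exact (S.baseChange F).add_mem hu.2 hv.2⟩
    -- the base-changed two-sided ideal
    set I' : TwoSidedIdeal (F ⊗[K] A) := TwoSidedIdeal.mk' (S.baseChange F)
      (S.baseChange F).zero_mem
      (fun ha hb => (S.baseChange F).add_mem ha hb)
      (fun ha => (S.baseChange F).neg_mem ha)
      (fun {x y} hy => (key_mul x y hy).1)
      (fun {x y} hx => (key_mul y x hx).2) with hI'def
    have hI'mem : ∀ t : F ⊗[K] A, t ∈ I' ↔ t ∈ S.baseChange F := fun t =>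
      TwoSidedIdeal.mem_mk' _ _ _ _ _ _ t
    -- I' is graded
    have hgraded : ∀ x ∈ I', ∃ y ∈ I', ∃ z ∈ I',
        y ∈ (𝒜 0).baseChange F ∧ z ∈ (𝒜 1).baseChange F ∧ x = y + z := by
      intro x hx
      rw [hI'mem] at hx
      have hle : S.baseChange F ≤ (S ⊓ 𝒜 0).baseChange F ⊔ (S ⊓ 𝒜 1).baseChange F := by
        rw [Submodule.baseChange_eq_span, Submodule.span_le]
        rintro _ ⟨m, hm, rfl⟩
        obtain ⟨y, hyI, z, hzI, hy0, hz1, rfl⟩ := hI m hm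
        rw [TensorProduct.mk_apply, TensorProduct.tmul_add]
        exact Submodule.add_mem _
          (Submodule.mem_sup_left (Submodule.tmul_mem_baseChange_of_mem 1 ⟨hyI, hy0⟩))
          (Submodule.mem_sup_right (Submodule.tmul_mem_baseChange_of_mem 1 ⟨hzI, hz1⟩))
      obtain ⟨y, hy, z, hz, rfl⟩ := Submodule.mem_sup.1 (hle hx)
      refine ⟨y, ?_, z, ?_, ?_, ?_, rfl⟩
      · exact (hI'mem y).2 (baseChange_mono' inf_le_left hy)
      · exact (hI'mem z).2 (baseChange_mono' inf_le_left hz)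
      · exact baseChange_mono' inf_le_right hy
      · exact baseChange_mono' inf_le_right hz
    rcases hF.2 I' hgraded with hbot | htop
    · left
      refine SetLike.ext fun a => ⟨fun ha => ?_, fun ha => ?_⟩
      · have h1 : (1 : F) ⊗ₜ[K] a ∈ I' :=
          (hI'mem _).2 (Submodule.tmul_mem_baseChange_of_mem 1 ha)
        rw [hbot, TwoSidedIdeal.mem_bot] at h1
        have := hφ_one a
        rw [h1, map_zero] at this
        rw [TwoSidedIdeal.mem_bot, ← this]
      · rw [TwoSidedIdeal.mem_bot] at ha
        rw [ha]; exact I.zero_mem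
    · right
      have h1 : (1 : F ⊗[K] A) ∈ I' := by rw [htop]; trivial
      rw [hI'mem] at h1
      have h1' : (1 : F ⊗[K] A) = (1 : F) ⊗ₜ[K] (1 : A) := rfl
      have hone_mem : (1 : A) ∈ S := by
        have := hφ_mem S _ h1
        rwa [h1', hφ_one] at this
      refine SetLike.ext fun a => ⟨fun _ => trivial, fun _ => ?_⟩
      have := I.mul_mem_left a 1 ((hSmem 1).1 hone_mem)
      rwa [mul_one] at this
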